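/- For fixed y > 1 and β ≥ 0, the function H(u) = 1 / (y^(β/u) * (y^(1/u) - 1)) is strictly convex on (0, ∞). -/

import Mathlib

open Real Set Filter

/-- `0 < s*e^s + s - 2e^s + 2` for `s > 0`: derivative of `s(e^s+1) - 2(e^s-1)`. -/
lemma ineq1 {s : ℝ} (hs : 0 < s) : 0 < s * exp s + s - 2 * exp s + 2 := by
  have hmono : StrictMonoOn (fun s : ℝ => s * exp s + s - 2 * exp s + 2) (Ici 0) := by
    apply strictMonoOn_of_deriv_pos (convex_Ici 0)
    · exact (Continuous.continuousOn (by fun_prop))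
    · intro t ht
      rw [interior_Ici] at ht
      have hd : HasDerivAt (fun s : ℝ => s * exp s + s - 2 * exp s + 2)
          (t * exp t - exp t + 1) t := by
        have h1 : HasDerivAt (fun s : ℝ => s * exp s) (1 * exp t + t * exp t) t :=
          (hasDerivAt_id t).mul (Real.hasDerivAt_exp t)
      -- combine
        have h2 : HasDerivAt (fun s : ℝ => 2 * exp s) (2 * exp t) t :=
          (Real.hasDerivAt_exp t).const_mul 2
        have := ((h1.add (hasDerivAt_id t)).sub h2).add_const 2
        refine this.congr_deriv ?_
        ring
      rw [hd.deriv]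
      have ht' : (0:ℝ) < t := ht
      have h2 : (-t) + 1 < exp (-t) := Real.add_one_lt_exp (neg_ne_zero.mpr ht'.ne')
      have h3 : (0:ℝ) < exp t := exp_pos t
      have h4 : exp (-t) * exp t = 1 := by rw [← exp_add]; simp
      nlinarith [mul_lt_mul_of_pos_right h2 h3]
  have := hmono (self_mem_Ici) (mem_Ici.mpr hs.le) hs
  simpa using this

/-- `2 s e^s + 1 < e^{2s}` for `s > 0`, from `s < sinh s`. -/
lemma ineq2 {s : ℝ} (hs : 0 < s) : 2 * s * exp s + 1 < (exp s) ^ 2 := by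
  have h : s < Real.sinh s := Real.self_lt_sinh_iff.mpr hs
  rw [Real.sinh_eq] at h
  have h4 : exp (-s) * exp s = 1 := by rw [← exp_add]; simp
  nlinarith [exp_pos s, exp_pos (-s)]

/-- Key algebraic positivity for the second derivative numerator. -/
lemma key (a b x : ℝ) (hx : 0 < x) (hb : 0 ≤ b) (hab : b < a) :
    0 < 2 * (a * exp (a * x⁻¹) - b * exp (b * x⁻¹)) ^ 2
      - (a ^ 2 * exp (a * x⁻¹) - b ^ 2 * exp (b * x⁻¹))
          * (exp (a * x⁻¹) - exp (b * x⁻¹))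
      - 2 * x * ((a * exp (a * x⁻¹) - b * exp (b * x⁻¹))
          * (exp (a * x⁻¹) - exp (b * x⁻¹))) := by
  set s : ℝ := (a - b) * x⁻¹ with hsdef
  have hs : 0 < s := mul_pos (sub_pos.2 hab) (inv_pos.2 hx)
  set B : ℝ := exp (b * x⁻¹) with hBdef
  set w : ℝ := exp s with hwdef
  have hA : exp (a * x⁻¹) = B * w := by
    rw [hBdef, hwdef, ← exp_add, hsdef]; ring_nf
  have hxv : x = (a - b) / s := by
    rw [hsdef]; field_simp
    rw [div_self (sub_ne_zero.2 hab.ne')]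
  have hP : 0 < s * w + s - 2 * w + 2 := by simpa [hwdef] using ineq1 hs
  have hR : 2 * s * w + 1 < w ^ 2 := by simpa [hwdef] using ineq2 hs
  have hBpos : 0 < B := exp_pos _
  have hwpos : 0 < w := exp_pos _
  have ha : 0 < a := lt_of_le_of_lt hb hab
  rw [hA, hxv]
  have hid : 2 * (a * (B * w) - b * B) ^ 2
      - (a ^ 2 * (B * w) - b ^ 2 * B) * ((B * w) - B)
      - 2 * ((a - b) / s) * ((a * (B * w) - b * B) * ((B * w) - B))
      = B ^ 2 * (a ^ 2 * w * (s * w + s - 2 * w + 2) + b ^ 2 * (s * w + s - 2 * w + 2)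
          + 2 * (a * b) * (w ^ 2 - 2 * s * w - 1)) / s := by
    field_simp
    ring
  rw [hid]
  apply div_pos _ hs
  have t1 : 0 < a ^ 2 * w * (s * w + s - 2 * w + 2) :=
    mul_pos (mul_pos (pow_pos ha 2) hwpos) hP
  have t2 : 0 ≤ b ^ 2 * (s * w + s - 2 * w + 2) :=
    mul_nonneg (sq_nonneg b) hP.le
  have t3 : 0 ≤ 2 * (a * b) * (w ^ 2 - 2 * s * w - 1) :=
    mul_nonneg (by positivity) (by linarith)
  positivity

lemma master (a b : ℝ) (hb : 0 ≤ b) (hab : b < a) :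
    StrictConvexOn ℝ (Set.Ioi 0) (fun u : ℝ => (exp (a * u⁻¹) - exp (b * u⁻¹))⁻¹) := by
  have ha : 0 < a := lt_of_le_of_lt hb hab
  have hDd : ∀ t : ℝ, HasDerivAt (fun t => exp (a * t) - exp (b * t))
      (a * exp (a * t) - b * exp (b * t)) t := by
    intro t
    have h1 : HasDerivAt (fun t : ℝ => a * t) a t := by
      simpa using (hasDerivAt_id t).const_mul a
    have h2 : HasDerivAt (fun t : ℝ => b * t) b t := by
      simpa using (hasDerivAt_id t).const_mul b
    have := h1.exp.sub h2.exp
    refine this.congr_deriv ?_; ring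
  have hNd : ∀ t : ℝ, HasDerivAt (fun t => a * exp (a * t) - b * exp (b * t))
      (a ^ 2 * exp (a * t) - b ^ 2 * exp (b * t)) t := by
    intro t
    have h1 : HasDerivAt (fun t : ℝ => a * t) a t := by
      simpa using (hasDerivAt_id t).const_mul a
    have h2 : HasDerivAt (fun t : ℝ => b * t) b t := by
      simpa using (hasDerivAt_id t).const_mul b
    have := (h1.exp.const_mul a).sub (h2.exp.const_mul b)
    refine this.congr_deriv ?_; ring
  have hDpos : ∀ t : ℝ, 0 < t → 0 < exp (a * t) - exp (b * t) := by
    intro t ht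
    have h : b * t < a * t := by nlinarith
    simpa [sub_pos] using exp_lt_exp.mpr h
  have hh1 : ∀ t : ℝ, 0 < t → HasDerivAt (fun t => (exp (a * t) - exp (b * t))⁻¹)
      (-(a * exp (a * t) - b * exp (b * t)) / (exp (a * t) - exp (b * t)) ^ 2) t :=
    fun t ht => (hDd t).inv (hDpos t ht).ne'
  have hh2 : ∀ t : ℝ, 0 < t → HasDerivAt
      (fun t => -(a * exp (a * t) - b * exp (b * t)) / (exp (a * t) - exp (b * t)) ^ 2)
      ((2 * (a * exp (a * t) - b * exp (b * t)) ^ 2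
        - (a ^ 2 * exp (a * t) - b ^ 2 * exp (b * t)) * (exp (a * t) - exp (b * t)))
        / (exp (a * t) - exp (b * t)) ^ 3) t := by
    intro t ht
    have hne : exp (a * t) - exp (b * t) ≠ 0 := (hDpos t ht).ne'
    have hsq := (hDd t).pow 2
    have := (hNd t).neg.div hsq (pow_ne_zero 2 hne)
    refine this.congr_deriv ?_
    push_cast
    simp only [Pi.neg_apply, Pi.pow_apply]
    field_simp
    ring
  set g : ℝ → ℝ := fun u => (exp (a * u⁻¹) - exp (b * u⁻¹))⁻¹ with hgdef
  set g1 : ℝ → ℝ := fun x =>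
    -(a * exp (a * x⁻¹) - b * exp (b * x⁻¹)) / (exp (a * x⁻¹) - exp (b * x⁻¹)) ^ 2
      * -(x ^ 2)⁻¹ with hg1def
  have hg1 : ∀ x ∈ Ioi (0:ℝ), HasDerivAt g (g1 x) x := by
    intro x hx
    have hx0 : (0:ℝ) < x := hx
    have ht : 0 < x⁻¹ := inv_pos.2 hx0
    have h : HasDerivAt ((fun t => (exp (a * t) - exp (b * t))⁻¹) ∘ fun u : ℝ => u⁻¹)
        (-(a * exp (a * x⁻¹) - b * exp (b * x⁻¹)) / (exp (a * x⁻¹) - exp (b * x⁻¹)) ^ 2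
          * -(x ^ 2)⁻¹) x :=
      HasDerivAt.comp x (hh1 x⁻¹ ht) (hasDerivAt_inv hx0.ne')
    exact h
  have hg2 : ∀ x ∈ Ioi (0:ℝ), HasDerivAt g1
      ((2 * (a * exp (a * x⁻¹) - b * exp (b * x⁻¹)) ^ 2
        - (a ^ 2 * exp (a * x⁻¹) - b ^ 2 * exp (b * x⁻¹)) * (exp (a * x⁻¹) - exp (b * x⁻¹))
        - 2 * x * ((a * exp (a * x⁻¹) - b * exp (b * x⁻¹))
            * (exp (a * x⁻¹) - exp (b * x⁻¹))))
        / ((exp (a * x⁻¹) - exp (b * x⁻¹)) ^ 3 * x ^ 4)) x := by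
    intro x hx
    have hx0 : (0:ℝ) < x := hx
    have ht : 0 < x⁻¹ := inv_pos.2 hx0
    have hne : exp (a * x⁻¹) - exp (b * x⁻¹) ≠ 0 := (hDpos _ ht).ne'
    have hF : HasDerivAt (fun x : ℝ =>
        -(a * exp (a * x⁻¹) - b * exp (b * x⁻¹)) / (exp (a * x⁻¹) - exp (b * x⁻¹)) ^ 2)
        ((2 * (a * exp (a * x⁻¹) - b * exp (b * x⁻¹)) ^ 2
          - (a ^ 2 * exp (a * x⁻¹) - b ^ 2 * exp (b * x⁻¹))
              * (exp (a * x⁻¹) - exp (b * x⁻¹)))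
          / (exp (a * x⁻¹) - exp (b * x⁻¹)) ^ 3 * -(x ^ 2)⁻¹) x := by
      have h : HasDerivAt ((fun t =>
          -(a * exp (a * t) - b * exp (b * t)) / (exp (a * t) - exp (b * t)) ^ 2)
            ∘ fun u : ℝ => u⁻¹)
          ((2 * (a * exp (a * x⁻¹) - b * exp (b * x⁻¹)) ^ 2
            - (a ^ 2 * exp (a * x⁻¹) - b ^ 2 * exp (b * x⁻¹))
                * (exp (a * x⁻¹) - exp (b * x⁻¹)))
            / (exp (a * x⁻¹) - exp (b * x⁻¹)) ^ 3 * -(x ^ 2)⁻¹) x :=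
        HasDerivAt.comp x (hh2 x⁻¹ ht) (hasDerivAt_inv hx0.ne')
      exact h
    have hG : HasDerivAt (fun x : ℝ => -(x ^ 2)⁻¹) (2 * x / (x ^ 2) ^ 2) x := by
      have := ((hasDerivAt_pow 2 x).inv (pow_ne_zero 2 hx0.ne')).neg
      refine this.congr_deriv ?_
      push_cast
      ring
    have := hF.mul hG
    refine this.congr_deriv ?_
    generalize hE : exp (a * x⁻¹) = E at hne ⊢
    generalize hFv : exp (b * x⁻¹) = F at hne ⊢
    field_simp
    ring
  apply strictConvexOn_of_deriv2_pos (convex_Ioi 0)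
  · exact fun x hx => ((hg1 x hx).continuousAt).continuousWithinAt
  · intro x hx
    rw [interior_Ioi] at hx
    have hx0 : (0:ℝ) < x := hx
    have hder : deriv g =ᶠ[nhds x] g1 :=
      Filter.eventually_of_mem (isOpen_Ioi.mem_nhds hx) (fun u hu => (hg1 u hu).deriv)
    show 0 < deriv (deriv g) x
    rw [hder.deriv_eq, (hg2 x hx).deriv]
    apply div_pos (key a b x hx0 hb hab)
    exact mul_pos (pow_pos (hDpos _ (inv_pos.2 hx0)) 3) (pow_pos hx0 4)

theorem stmt4 (y β : ℝ) (hy : 1 < y) (hβ : 0 ≤ β) :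
    StrictConvexOn ℝ (Set.Ioi 0)
      (fun u : ℝ => 1 / (y ^ (β / u) * (y ^ (1 / u) - 1))) := by
  have hL : 0 < Real.log y := Real.log_pos hy
  have hy0 : 0 < y := lt_trans one_pos hy
  have hfun : (fun u : ℝ => 1 / (y ^ (β / u) * (y ^ (1 / u) - 1)))
      = fun u : ℝ => (exp ((Real.log y * β + Real.log y) * u⁻¹)
          - exp ((Real.log y * β) * u⁻¹))⁻¹ := by
    funext u
    rw [Real.rpow_def_of_pos hy0, Real.rpow_def_of_pos hy0, one_div, mul_sub, mul_one,
      ← Real.exp_add]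
    have e1 : Real.log y * (β / u) + Real.log y * (1 / u)
        = (Real.log y * β + Real.log y) * u⁻¹ := by
      simp only [div_eq_mul_inv]; ring
    have e2 : Real.log y * (β / u) = Real.log y * β * u⁻¹ := by
      simp only [div_eq_mul_inv]; ring
    rw [e1, e2]
  rw [hfun]
  exact master _ _ (mul_nonneg hL.le hβ) (by linarith)
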